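/- Let p ≥ 2 and q ≥ 1 be integers, α < 0 and γ > 1 real numbers. Then ∫₁^∞ e^{(1−p−q)s}·(sinh(exp(α·s^γ)))^{−q} ds = +∞. -/

import Mathlib

open Real MeasureTheory Filter Set

lemma sinh_le_mul_exp {x : ℝ} (_hx : 0 ≤ x) : Real.sinh x ≤ x * Real.exp x := by
  have h1 : (-(2*x)) + 1 ≤ Real.exp (-(2*x)) := Real.add_one_le_exp _
  have h2 : Real.exp (-(2*x)) = Real.exp (-x) * Real.exp (-x) := by
    rw [← Real.exp_add]; ring_nf
  have h3 : Real.exp (-x) * Real.exp x = 1 := by rw [← Real.exp_add]; simp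
  have h4 := Real.exp_pos x
  have h5 := Real.exp_pos (-x)
  rw [Real.sinh_eq]
  nlinarith [h1, h2, h3, h4, h5]

/-- For superlinear exponential decay profiles `f(s) = e^{α s^γ}` with `α < 0`, `γ > 1`,
the hyperbolic test integral always diverges. -/
theorem hyperbolic_superlinear_integral_infinite (p q : ℕ) (hp : 2 ≤ p) (hq : 1 ≤ q)
    (α γ : ℝ) (hα : α < 0) (hγ : 1 < γ) :
    ¬ MeasureTheory.IntegrableOn
        (fun s : ℝ => Real.exp (((1:ℝ) - p - q) * s) *
          Real.sinh (Real.exp (α * s ^ γ)) ^ (-(q:ℝ))) (Set.Ici 1) := by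
  intro hint
  set F : ℝ → ℝ := fun s : ℝ => Real.exp (((1:ℝ) - p - q) * s) *
          Real.sinh (Real.exp (α * s ^ γ)) ^ (-(q:ℝ)) with hF
  have hq0 : (0:ℝ) < q := by exact_mod_cast hq
  have hp0 : (0:ℝ) < p := by positivity
  have hqα : 0 < -(q:ℝ) * α := by nlinarith
  -- eventually F s ≥ 1
  have hev : ∀ᶠ s in atTop, 1 ≤ F s := by
    have h1 : Tendsto (fun s : ℝ => (-(q:ℝ)*α) * s ^ (γ-1)) atTop atTop :=
      (tendsto_rpow_atTop (by linarith)).const_mul_atTop hqα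
    filter_upwards [h1.eventually_ge_atTop ((p:ℝ) + q + q * Real.log 3),
      eventually_ge_atTop (1:ℝ)] with s hs hs1
    have hs0 : (0:ℝ) < s := by linarith
    set x := Real.exp (α * s ^ γ) with hx
    have hxpos : 0 < x := Real.exp_pos _
    have hsγ : (0:ℝ) < s ^ γ := Real.rpow_pos_of_pos hs0 γ
    have hxle1 : x ≤ 1 := by
      rw [hx, ← Real.exp_zero]
      exact Real.exp_le_exp.2 (by nlinarith)
    -- sinh x ≤ 3 x
    have hsinh : Real.sinh x ≤ 3 * x := by
      have := sinh_le_mul_exp hxpos.le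
      have he : Real.exp x ≤ Real.exp 1 := Real.exp_le_exp.2 hxle1
      have h3 : Real.exp 1 < 3 := by
        have := Real.exp_one_lt_d9; linarith
      nlinarith
    have hsinhpos : 0 < Real.sinh x := by positivity
    have hstep : (3 * x) ^ (-(q:ℝ)) ≤ Real.sinh x ^ (-(q:ℝ)) :=
      Real.rpow_le_rpow_of_nonpos hsinhpos hsinh (neg_nonpos.2 hq0.le)
    -- compute (3x)^(-q) = 3^(-q) * exp(-q * (α * s^γ))
    have hxrw : (3 * x) ^ (-(q:ℝ)) =
        (3:ℝ) ^ (-(q:ℝ)) * Real.exp (-(q:ℝ) * (α * s ^ γ)) := by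
      rw [Real.mul_rpow (by norm_num) hxpos.le, hx, ← Real.exp_mul]
      ring_nf
    -- lower bound for F s
    have hFlow : (3:ℝ) ^ (-(q:ℝ)) *
        Real.exp (((1:ℝ) - p - q) * s + -(q:ℝ) * (α * s ^ γ)) ≤ F s := by
      rw [hF]
      calc (3:ℝ) ^ (-(q:ℝ)) * Real.exp (((1:ℝ) - p - q) * s + -(q:ℝ) * (α * s ^ γ))
          = Real.exp (((1:ℝ) - p - q) * s) * ((3:ℝ) ^ (-(q:ℝ))
              * Real.exp (-(q:ℝ) * (α * s ^ γ))) := by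
            rw [Real.exp_add]; ring
        _ ≤ Real.exp (((1:ℝ) - p - q) * s) * Real.sinh x ^ (-(q:ℝ)) := by
            apply mul_le_mul_of_nonneg_left _ (Real.exp_pos _).le
            rw [← hxrw]; exact hstep
    -- the exponent is large
    have hsplit : s ^ γ = s * s ^ (γ - 1) := by
      have h := (Real.rpow_add hs0 1 (γ - 1)).symm
      rw [Real.rpow_one] at h
      rw [h]; norm_num
    have hexp : q * Real.log 3 ≤ ((1:ℝ) - p - q) * s + -(q:ℝ) * (α * s ^ γ) := by
      have : ((1:ℝ) - p - q) * s + -(q:ℝ) * (α * s ^ γ)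
          = s * ((1 - (p:ℝ) - q) + (-(q:ℝ) * α) * s ^ (γ-1)) := by
        rw [hsplit]; ring
      rw [this]
      have hlog3 : 0 ≤ Real.log 3 := Real.log_nonneg (by norm_num)
      have h2 : (1:ℝ) + (q:ℝ) * Real.log 3 ≤
          (1 - (p:ℝ) - q) + (-(q:ℝ) * α) * s ^ (γ-1) := by linarith
      have hEpos : (0:ℝ) ≤ 1 + (q:ℝ) * Real.log 3 := by positivity
      calc (q:ℝ) * Real.log 3 ≤ 1 + (q:ℝ) * Real.log 3 := by linarith
        _ ≤ s * (1 + (q:ℝ) * Real.log 3) := le_mul_of_one_le_left hEpos hs1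
        _ ≤ s * ((1 - (p:ℝ) - q) + (-(q:ℝ) * α) * s ^ (γ-1)) :=
            mul_le_mul_of_nonneg_left h2 hs0.le
    have h3q : (3:ℝ) ^ (-(q:ℝ)) * Real.exp ((q:ℝ) * Real.log 3) = 1 := by
      rw [mul_comm ((q:ℝ)) (Real.log 3), Real.exp_mul,
        Real.exp_log (by norm_num : (0:ℝ) < 3),
        ← Real.rpow_add (by norm_num : (0:ℝ) < 3)]
      norm_num
    calc (1:ℝ) = (3:ℝ) ^ (-(q:ℝ)) * Real.exp ((q:ℝ) * Real.log 3) := h3q.symm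
      _ ≤ (3:ℝ) ^ (-(q:ℝ)) * Real.exp (((1:ℝ) - p - q) * s + -(q:ℝ) * (α * s ^ γ)) := by
          apply mul_le_mul_of_nonneg_left (Real.exp_le_exp.2 hexp) (by positivity)
      _ ≤ F s := hFlow
  -- derive contradiction
  obtain ⟨N, hN⟩ := eventually_atTop.1 hev
  set M := max N 1 with hM
  have hsub : Set.Ici M ⊆ Set.Ici (1:ℝ) := Set.Ici_subset_Ici.2 (le_max_right _ _)
  have hint' : IntegrableOn F (Set.Ici M) := hint.mono_set hsub
  have hconst : Integrable (fun _ : ℝ => (1:ℝ)) (volume.restrict (Set.Ici M)) := by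
    apply hint'.norm.mono' aestronglyMeasurable_const
    rw [ae_restrict_iff' measurableSet_Ici]
    filter_upwards with s hs
    have h1 : 1 ≤ F s := hN s (le_trans (le_max_left _ _) hs)
    simp only [norm_one, Real.norm_eq_abs]
    exact h1.trans (le_abs_self _)
  rw [integrable_const_iff] at hconst
  rcases hconst with h | h
  · norm_num at h
  · replace h := h.measure_univ_lt_top; rw [Measure.restrict_apply_univ] at h
    simp [Real.volume_Ici] at h
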